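/- Let T be a normal tree (every node has extensions at every higher level below the height of T, and nodes at limit levels are determined by their sets of predecessors) and suppose f : ^{<ω+1}2 → T is a map that is strictly order preserving and preserves incomparability. Then there exists a map g : ^{<ω+1}2 → T that is strictly order preserving, preserves incomparability, preserves meets (g(a ∧ b) = g(a) ∧ g(b) for all a, b), and is continuous at limits: for every x ∈ ^ω2, g(x) is the least upper bound in T of {g(x↾n) | n < ω}. -/

import Mathlib

open Cardinal Set

/-- The tree `^{<ω+1}2` of binary sequences of length at most `ω`: finite sequences
(`List Bool`) together with infinite sequences (`ℕ → Bool`). -/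
abbrev Bt : Type := List Bool ⊕ (ℕ → Bool)

/-- The initial-segment order on `^{<ω+1}2`. -/
def btLE : Bt → Bt → Prop
  | Sum.inl l, Sum.inl l' => l <+: l'
  | Sum.inl l, Sum.inr x => ∀ i : Fin l.length, l.get i = x i.1
  | Sum.inr x, Sum.inr y => x = y
  | Sum.inr _, Sum.inl _ => False

/-- The height of a node `t` of a tree: the order type of its set of strict predecessors. -/
noncomputable def treeHt {T : Type} [PartialOrder T]
    (hwo : ∀ t : T, IsWellOrder {s : T // s < t} fun a b => (a : T) < (b : T)) (t : T) :
    Ordinal :=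
  @Ordinal.type {s : T // s < t} (fun a b => (a : T) < (b : T)) (hwo t)

section TreeAux
variable {T : Type} [PartialOrder T]
variable (hwo : ∀ t : T, IsWellOrder {s : T // s < t} fun a b => (a : T) < (b : T))
include hwo

lemma tri {t r r' : T} (h : r < t) (h' : r' < t) : r < r' ∨ r = r' ∨ r' < r := by
  have := @trichotomous _ (fun a b : {s : T // s < t} => (a : T) < (b : T)) (hwo t).toTrichotomous ⟨r, h⟩ ⟨r', h'⟩
  rcases this with h1 | h1 | h1
  · exact Or.inl h1
  · exact Or.inr (Or.inl (congrArg Subtype.val h1))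
  · exact Or.inr (Or.inr h1)

lemma ht_eq_typein {s t : T} (h : s < t) :
    treeHt hwo s =
      @Ordinal.typein {s : T // s < t} (fun a b => (a : T) < (b : T)) (hwo t) ⟨s, h⟩ := by
  letI := hwo t
  rw [← Ordinal.type_subrel]
  apply Ordinal.type_eq.2
  refine ⟨⟨⟨fun r => ⟨⟨r.1, lt_trans r.2 h⟩, r.2⟩,
    fun r => ⟨r.1.1, r.2⟩, fun r => rfl, fun r => rfl⟩, by intro a b; exact Iff.rfl⟩⟩

lemma ht_lt {s t : T} (h : s < t) : treeHt hwo s < treeHt hwo t := by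
  rw [ht_eq_typein hwo h]
  exact @Ordinal.typein_lt_type _ _ (hwo t) _

lemma exists_level {t : T} {β} (h : β < treeHt hwo t) : ∃ s, s < t ∧ treeHt hwo s = β := by
  letI := hwo t
  obtain ⟨⟨s, hs⟩, rfl⟩ :=
    @Ordinal.typein_surj {s : T // s < t} (fun a b => (a : T) < (b : T)) (hwo t) _ h
  exact ⟨s, hs, ht_eq_typein hwo hs⟩

lemma lt_of_ht_lt {t r r' : T} (hr : r < t) (hr' : r' < t)
    (h : treeHt hwo r < treeHt hwo r') : r < r' := by
  rcases tri hwo hr hr' with h1 | h1 | h1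
  · exact h1
  · exact absurd (h1 ▸ h) (lt_irrefl _)
  · exact absurd (lt_trans h (ht_lt hwo h1)) (lt_irrefl _)

lemma level_node {v : T} {δ : Ordinal} (hδ : δ ≤ treeHt hwo v) :
    ∃ s, s ≤ v ∧ treeHt hwo s = δ ∧ ∀ r, r < s ↔ (r < v ∧ treeHt hwo r < δ) := by
  rcases eq_or_lt_of_le hδ with h | h
  · exact ⟨v, le_refl _, h.symm, fun r => ⟨fun hr => ⟨hr, h ▸ ht_lt hwo hr⟩, fun hr => hr.1⟩⟩
  · obtain ⟨s, hsv, hs⟩ := exists_level hwo h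
    refine ⟨s, le_of_lt hsv, hs, fun r => ⟨fun hr => ⟨lt_trans hr hsv, hs ▸ ht_lt hwo hr⟩,
      fun hr => lt_of_ht_lt hwo hr.1 hsv (hs.symm ▸ hr.2)⟩⟩

variable (hlim : ∀ s t : T, treeHt hwo s = treeHt hwo t → Order.IsSuccLimit (treeHt hwo s) →
      (∀ r : T, r < s ↔ r < t) → s = t)
include hlim

lemma meet_exists {a b : T} (hab : ¬ a ≤ b) (hba : ¬ b ≤ a)
    {r₀ : T} (h0a : r₀ ≤ a) (h0b : r₀ ≤ b) :
    ∃ m, m ≤ a ∧ m ≤ b ∧ ∀ r, r ≤ a → r ≤ b → r ≤ m := by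
  set S : Set Ordinal := {β | ∃ r : T, r ≤ a ∧ r ≤ b ∧ treeHt hwo r = β} with hSdef
  have hlta : ∀ r : T, r ≤ a → r ≤ b → r < a ∧ r < b := by
    intro r h1 h2
    refine ⟨lt_of_le_of_ne h1 ?_, lt_of_le_of_ne h2 ?_⟩
    · rintro rfl; exact hab h2
    · rintro rfl; exact hba h1
  have hdc : ∀ β ∈ S, ∀ β' < β, β' ∈ S := by
    rintro β ⟨r, hra, hrb, rfl⟩ β' hβ'
    obtain ⟨r', hr', hr'ht⟩ := exists_level hwo (t := r) hβ'
    exact ⟨r', le_of_lt (lt_of_lt_of_le hr' hra), le_of_lt (lt_of_lt_of_le hr' hrb), hr'ht⟩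
  have hSne : S.Nonempty := ⟨_, r₀, h0a, h0b, rfl⟩
  have hSbdd : ∀ β ∈ S, β < treeHt hwo a := by
    rintro β ⟨r, hra, hrb, rfl⟩; exact ht_lt hwo (hlta r hra hrb).1
  have hSbddb : ∀ β ∈ S, β < treeHt hwo b := by
    rintro β ⟨r, hra, hrb, rfl⟩; exact ht_lt hwo (hlta r hra hrb).2
  have hbdd : BddAbove S := ⟨treeHt hwo a, fun β hβ => le_of_lt (hSbdd β hβ)⟩
  set δ := sSup S with hδdef
  have hmax : ∀ m : T, m ≤ a → m ≤ b → treeHt hwo m = δ →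
      ∀ r, r ≤ a → r ≤ b → r ≤ m := by
    intro m hma hmb hmδ r hra hrb
    have hrS : treeHt hwo r ∈ S := ⟨r, hra, hrb, rfl⟩
    have := le_csSup hbdd hrS
    rcases tri hwo (hlta r hra hrb).1 (hlta m hma hmb).1 with h1 | h1 | h1
    · exact le_of_lt h1
    · exact le_of_eq h1
    · exact absurd (lt_of_le_of_lt (hmδ ▸ this) (ht_lt hwo h1)) (lt_irrefl _)
  by_cases hδS : δ ∈ S
  · obtain ⟨m, hma, hmb, hmδ⟩ := hδS
    exact ⟨m, hma, hmb, hmax m hma hmb hmδ⟩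
  · exfalso
    have hS : ∀ β < δ, β ∈ S := by
      intro β hβ
      obtain ⟨γ, hγS, hγ⟩ := exists_lt_of_lt_csSup hSne hβ
      exact hdc γ hγS β hγ
    have hδlim : Order.IsSuccLimit δ := by
      rw [Ordinal.isSuccLimit_iff, Order.isSuccPrelimit_iff_succ_lt]
      refine ⟨?_, ?_⟩
      · intro h0
        have h1 := le_csSup hbdd hSne.choose_spec
        rw [← hδdef, h0, nonpos_iff_eq_zero] at h1
        have h2 := hSne.choose_spec
        rw [h1] at h2
        exact hδS (by rw [h0]; exact h2)
      · intro β hβ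
        rcases lt_or_ge (Order.succ β) δ with h | h
        · exact h
        · exfalso
          have hsb : δ = Order.succ β := le_antisymm h (Order.succ_le_iff.2 hβ)
          have : δ ≤ β := csSup_le hSne (fun γ hγ => by
            rcases lt_or_ge γ δ with h2 | h2
            · exact Order.lt_succ_iff.1 (hsb ▸ h2)
            · have := le_csSup hbdd hγ
              have hγδ : γ = δ := le_antisymm this h2
              exact absurd (hγδ ▸ hγ) hδS)
          exact absurd (lt_of_lt_of_le hβ this) (lt_irrefl _)
    have hδa : δ ≤ treeHt hwo a := csSup_le hSne (fun β hβ => le_of_lt (hSbdd β hβ))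
    have hδb : δ ≤ treeHt hwo b := csSup_le hSne (fun β hβ => le_of_lt (hSbddb β hβ))
    have claim : ∀ r : T, treeHt hwo r < δ → ((r < a) ↔ (r < b)) := by
      have key : ∀ r : T, treeHt hwo r < δ → r < a → r < b := by
        intro r hr hra
        obtain ⟨r', hr'a, hr'b, hr'ht⟩ := hS _ (hδlim.succ_lt hr)
        have hr'lta := (hlta r' hr'a hr'b).1
        have : r < r' := lt_of_ht_lt hwo hra hr'lta (by rw [hr'ht]; exact Order.lt_succ _)
        exact lt_of_lt_of_le this hr'b
      have key' : ∀ r : T, treeHt hwo r < δ → r < b → r < a := by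
        intro r hr hrb
        obtain ⟨r', hr'a, hr'b, hr'ht⟩ := hS _ (hδlim.succ_lt hr)
        have hr'ltb := (hlta r' hr'a hr'b).2
        have : r < r' := lt_of_ht_lt hwo hrb hr'ltb (by rw [hr'ht]; exact Order.lt_succ _)
        exact lt_of_lt_of_le this hr'a
      exact fun r hr => ⟨key r hr, key' r hr⟩
    obtain ⟨sa, hsaa, hsaht, hsa⟩ := level_node hwo hδa
    obtain ⟨sb, hsbb, hsbht, hsb⟩ := level_node hwo hδb
    have : sa = sb := by
      apply hlim sa sb (by rw [hsaht, hsbht]) (hsaht ▸ hδlim)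
      intro r
      rw [hsa r, hsb r]
      constructor
      · rintro ⟨h1, h2⟩; exact ⟨(claim r h2).1 h1, h2⟩
      · rintro ⟨h1, h2⟩; exact ⟨(claim r h2).2 h1, h2⟩
    exact hδS ⟨sa, hsaa, this ▸ hsbb, hsaht⟩

lemma sup_exists (c : ℕ → T) (hc : ∀ n, c n < c (n + 1)) {v : T} (hv : ∀ n, c n < v) :
    ∃ m, m ≤ v ∧ (∀ n, c n < m) ∧ ∀ u : T, (∀ n, c n ≤ u) → m ≤ u := by
  set S : Set Ordinal := Set.range (fun n => treeHt hwo (c n)) with hSdef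
  have hSne : S.Nonempty := ⟨_, 0, rfl⟩
  have hbdd : BddAbove S := ⟨treeHt hwo v, by rintro β ⟨n, rfl⟩; exact le_of_lt (ht_lt hwo (hv n))⟩
  set δ := sSup S with hδdef
  have hcnδ : ∀ n, treeHt hwo (c n) < δ :=
    fun n => lt_of_lt_of_le (ht_lt hwo (hc n)) (le_csSup hbdd ⟨n + 1, rfl⟩)
  have hδv : δ ≤ treeHt hwo v :=
    csSup_le hSne (by rintro β ⟨n, rfl⟩; exact le_of_lt (ht_lt hwo (hv n)))
  have hδlim : Order.IsSuccLimit δ := by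
    rw [Ordinal.isSuccLimit_iff, Order.isSuccPrelimit_iff_succ_lt]
    refine ⟨fun h0 => ?_, fun β hβ => ?_⟩
    · exact absurd (h0 ▸ hcnδ 0) not_lt_zero
    · obtain ⟨γ, ⟨n, rfl⟩, hγ⟩ := exists_lt_of_lt_csSup hSne hβ
      exact lt_of_le_of_lt (Order.succ_le_iff.2 hγ) (hcnδ n)
  obtain ⟨m, hmv, hmht, hm⟩ := level_node hwo hδv
  have hcm : ∀ n, c n < m := by
    intro n
    rw [hm]
    exact ⟨hv n, hmht ▸ hcnδ n⟩
  refine ⟨m, hmv, hcm, ?_⟩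
  intro u hu
  have hcu : ∀ n, c n < u := by
    intro n
    rcases lt_or_eq_of_le (hu n) with h | h
    · exact h
    · exact absurd (h ▸ hu (n + 1)) (not_le_of_gt (hc n))
  have hδu : δ ≤ treeHt hwo u :=
    csSup_le hSne (by rintro β ⟨n, rfl⟩; exact le_of_lt (ht_lt hwo (hcu n)))
  obtain ⟨su, hsuu, hsuht, hsu⟩ := level_node hwo hδu
  have hmsu : m = su := by
    apply hlim m su (by rw [hmht, hsuht]) (hmht ▸ hδlim)
    intro r
    rw [hm, hsu]
    constructor
    · rintro ⟨h1, h2⟩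
      obtain ⟨γ, ⟨n, rfl⟩, hγ⟩ := exists_lt_of_lt_csSup hSne (hδdef ▸ h2)
      have : r < c n := lt_of_ht_lt hwo h1 (hv n) hγ
      exact ⟨lt_of_lt_of_le this (hu n), h2⟩
    · rintro ⟨h1, h2⟩
      obtain ⟨γ, ⟨n, rfl⟩, hγ⟩ := exists_lt_of_lt_csSup hSne (hδdef ▸ h2)
      have : r < c n := lt_of_ht_lt hwo h1 (hcu n) hγ
      exact ⟨lt_of_lt_of_le this (le_of_lt (hv n)), h2⟩
  exact hmsu ▸ hsuu

end TreeAux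

section BtAux

/-- `l` followed by the constant sequence `i`. -/
def bext (l : List Bool) (i : Bool) : ℕ → Bool := fun n => if h : n < l.length then l[n] else i

/-- The restriction of `x` to its first `n` values, as a list. -/
def bres (x : ℕ → Bool) (n : ℕ) : List Bool := List.ofFn fun i : Fin n => x i.1

lemma bext_lt (l : List Bool) (i : Bool) {k : ℕ} (hk : k < l.length) : bext l i k = l[k] :=
  dif_pos hk

lemma bext_at (l : List Bool) (i : Bool) : bext l i l.length = i :=
  dif_neg (lt_irrefl _)

@[simp] lemma bres_length (x : ℕ → Bool) (n : ℕ) : (bres x n).length = n := by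
  simp [bres]

lemma bres_get (x : ℕ → Bool) (n : ℕ) {k : ℕ} (hk : k < (bres x n).length) :
    (bres x n)[k] = x k := by
  simp [bres]

lemma pfx_get {l l' : List Bool} (h : l <+: l') {i : ℕ} (hi : i < l.length) :
    l[i] = l'[i]'(lt_of_lt_of_le hi h.length_le) := by
  obtain ⟨t, rfl⟩ := h
  exact (List.getElem_append_left hi).symm

lemma pfx_of {l l' : List Bool} (h : l.length ≤ l'.length)
    (h2 : ∀ (i : ℕ) (hi : i < l.length), l[i] = l'[i]'(lt_of_lt_of_le hi h)) : l <+: l' := by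
  rw [List.prefix_iff_eq_take]
  apply List.ext_getElem
  · simp [Nat.min_eq_left h]
  · intro i h1 h2'
    rw [List.getElem_take]
    exact h2 i h1

lemma btLE_inl_inr {l : List Bool} {x : ℕ → Bool} :
    btLE (Sum.inl l) (Sum.inr x) ↔ ∀ k (hk : k < l.length), l[k] = x k := by
  show (∀ i : Fin l.length, l.get i = x i.1) ↔ _
  constructor
  · intro h k hk
    exact h ⟨k, hk⟩
  · intro h i
    exact h i.1 i.2

lemma not_btLE_inr_inl {x : ℕ → Bool} {l : List Bool} : ¬ btLE (Sum.inr x) (Sum.inl l) :=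
  fun h => h

lemma btLE_refl (s : Bt) : btLE s s := by
  cases s with
  | inl l => exact List.prefix_refl l
  | inr x => exact rfl

lemma btLE_trans (s t u : Bt) (h1 : btLE s t) (h2 : btLE t u) : btLE s u := by
  match s, t, u with
  | Sum.inl l, Sum.inl l', Sum.inl l'' => exact List.IsPrefix.trans h1 h2
  | Sum.inl l, Sum.inl l', Sum.inr x =>
    rw [btLE_inl_inr] at h2 ⊢
    intro k hk
    rw [pfx_get h1 hk]
    exact h2 k (lt_of_lt_of_le hk h1.length_le)
  | Sum.inl l, Sum.inr x, Sum.inr y => exact (h2 : x = y) ▸ h1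
  | Sum.inr x, Sum.inr y, Sum.inr z => exact (h1 : x = y).trans h2
  | Sum.inr x, Sum.inl l, _ => exact absurd h1 not_btLE_inr_inl
  | Sum.inl l, Sum.inr x, Sum.inl l' => exact absurd h2 not_btLE_inr_inl
  | Sum.inr x, Sum.inr y, Sum.inl l => exact absurd h2 not_btLE_inr_inl

lemma btLE_antisymm (s t : Bt) (h1 : btLE s t) (h2 : btLE t s) : s = t := by
  match s, t with
  | Sum.inl l, Sum.inl l' =>
    exact congrArg Sum.inl (h1.eq_of_length (le_antisymm h1.length_le h2.length_le))
  | Sum.inl l, Sum.inr x => exact absurd h2 not_btLE_inr_inl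
  | Sum.inr x, Sum.inl l => exact absurd h1 not_btLE_inr_inl
  | Sum.inr x, Sum.inr y => exact congrArg Sum.inr (h1 : x = y)

lemma btLE_bext (l : List Bool) (i : Bool) : btLE (Sum.inl l) (Sum.inr (bext l i)) := by
  rw [btLE_inl_inr]
  intro k hk
  exact (bext_lt l i hk).symm

lemma concat_at (l : List Bool) (i : Bool) : (l ++ [i])[l.length]'(by simp) = i := by
  simp

lemma concat_lt (l : List Bool) (i : Bool) {k : ℕ} (hk : k < l.length) :
    (l ++ [i])[k]'(by simp; omega) = l[k] :=
  List.getElem_append_left hk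

lemma btLE_concat_bext (l : List Bool) (i : Bool) :
    btLE (Sum.inl (l ++ [i])) (Sum.inr (bext l i)) := by
  rw [btLE_inl_inr]
  intro k hk
  rw [List.length_append, List.length_singleton] at hk
  rcases lt_or_eq_of_le (Nat.lt_succ_iff.1 hk) with h | h
  · rw [concat_lt l i h, bext_lt l i h]
  · subst h
    rw [concat_at, bext_at]

lemma not_btLE_of_bit (l : List Bool) (i : Bool) (x : ℕ → Bool) (h : x l.length ≠ i) :
    ¬ btLE (Sum.inl (l ++ [i])) (Sum.inr x) := by
  rw [btLE_inl_inr]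
  intro hb
  have := hb l.length (by simp)
  rw [concat_at] at this
  exact h this.symm

lemma bext_ne (l : List Bool) (i : Bool) : bext l i ≠ bext l (!i) := by
  intro h
  have := congrFun h l.length
  rw [bext_at, bext_at] at this
  cases i <;> simp at this

lemma incomp_ext {l l' : List Bool} (h1 : ¬ l <+: l') (h2 : ¬ l' <+: l) (i : Bool) :
    ¬ btLE (Sum.inl l) (Sum.inr (bext l' i)) := by
  rw [btLE_inl_inr]
  intro h
  rcases le_or_gt l.length l'.length with hl | hl
  · apply h1
    apply pfx_of hl
    intro k hk
    rw [h k hk, bext_lt l' i (lt_of_lt_of_le hk hl)]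
  · apply h2
    apply pfx_of hl.le
    intro k hk
    rw [h k (lt_of_lt_of_le hk hl.le), bext_lt l' i hk]

lemma btLE_bres (x : ℕ → Bool) (n : ℕ) : btLE (Sum.inl (bres x n)) (Sum.inr x) := by
  rw [btLE_inl_inr]
  intro k hk
  exact bres_get x n hk

lemma bres_prefix (x : ℕ → Bool) {n m : ℕ} (h : n ≤ m) : bres x n <+: bres x m := by
  apply pfx_of (by simpa using h)
  intro k hk
  rw [bres_get, bres_get]

lemma eq_bres_of_btLE {l : List Bool} {x : ℕ → Bool} (h : btLE (Sum.inl l) (Sum.inr x)) :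
    l = bres x l.length := by
  rw [btLE_inl_inr] at h
  apply List.ext_getElem (by simp)
  intro k h1 h2
  rw [h k h1, bres_get]

lemma bool_resolve {j ia ib : Bool} (h1 : j ≠ ia) (h2 : ia ≠ ib) : j = ib := by
  cases j <;> cases ia <;> cases ib <;> simp_all

lemma inl_concat_ne (l : List Bool) (i : Bool) : (Sum.inl (l ++ [i]) : Bt) ≠ Sum.inl l := by
  intro h
  have := congrArg List.length (Sum.inl.inj h)
  simp at this

end BtAux

set_option maxHeartbeats 1000000 in
/-- Let `T` be a normal tree and `f : ^{<ω+1}2 → T` an isomorphic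
embedding (strictly order preserving and incomparability preserving).  Then there is an
isomorphic embedding `g : ^{<ω+1}2 → T` that moreover preserves meets and is continuous
at limits: for `x ∈ ^ω2`, `g x` is the least upper bound of `{g (x↾n) | n < ω}`. -/
theorem statement5 (T : Type) [PartialOrder T]
    (hwo : ∀ t : T, IsWellOrder {s : T // s < t} fun a b => (a : T) < (b : T))
    -- normality: every node has extensions at every higher nonempty level
    (hext : ∀ s : T, ∀ β : Ordinal, treeHt hwo s < β → (∃ t : T, treeHt hwo t = β) →
      ∃ t : T, treeHt hwo t = β ∧ s < t)
    -- normality: nodes at limit levels are determined by their sets of predecessors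
    (hlim : ∀ s t : T, treeHt hwo s = treeHt hwo t → Order.IsSuccLimit (treeHt hwo s) →
      (∀ r : T, r < s ↔ r < t) → s = t)
    (f : Bt → T)
    (hf₁ : ∀ s t : Bt, btLE s t → s ≠ t → f s < f t)
    (hf₂ : ∀ s t : Bt, ¬ btLE s t → ¬ btLE t s → ¬ (f s ≤ f t) ∧ ¬ (f t ≤ f s)) :
    ∃ g : Bt → T,
      (∀ s t : Bt, btLE s t → s ≠ t → g s < g t) ∧
      (∀ s t : Bt, ¬ btLE s t → ¬ btLE t s → ¬ (g s ≤ g t) ∧ ¬ (g t ≤ g s)) ∧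
      -- `g` preserves meets: if `c` is the meet of `a` and `b` then `g c` is the meet of
      -- `g a` and `g b`
      (∀ a b c : Bt,
        (btLE c a ∧ btLE c b ∧ ∀ r : Bt, btLE r a → btLE r b → btLE r c) →
        (g c ≤ g a ∧ g c ≤ g b ∧ ∀ r : T, r ≤ g a → r ≤ g b → r ≤ g c)) ∧
      -- `g` is continuous at limits
      (∀ x : ℕ → Bool,
        IsLUB {t : T | ∃ n : ℕ, t = g (Sum.inl (List.ofFn fun i : Fin n => x i.1))}
          (g (Sum.inr x))) := by
  classical
  -- construct the meet points
  have hmeet : ∀ l : List Bool, ∃ m : T,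
      (m ≤ f (Sum.inr (bext l false)) ∧ m ≤ f (Sum.inr (bext l true))) ∧
      ∀ r, r ≤ f (Sum.inr (bext l false)) → r ≤ f (Sum.inr (bext l true)) → r ≤ m := by
    intro l
    have hne : bext l false ≠ bext l true := by
      have := bext_ne l false
      simpa using this
    have h1 : ¬ btLE (Sum.inr (bext l false)) (Sum.inr (bext l true)) := fun h => hne h
    have h2 : ¬ btLE (Sum.inr (bext l true)) (Sum.inr (bext l false)) := fun h => hne h.symm
    obtain ⟨hf12, hf21⟩ := hf₂ _ _ h1 h2
    have h0 : f (Sum.inl l) < f (Sum.inr (bext l false)) :=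
      hf₁ _ _ (btLE_bext l false) (by simp)
    have h0' : f (Sum.inl l) < f (Sum.inr (bext l true)) :=
      hf₁ _ _ (btLE_bext l true) (by simp)
    obtain ⟨m, hma, hmb, hmax⟩ := meet_exists hwo hlim hf12 hf21 h0.le h0'.le
    exact ⟨m, ⟨hma, hmb⟩, hmax⟩
  choose m hmle0 hmmax using hmeet
  have hmle : ∀ l i, m l ≤ f (Sum.inr (bext l i)) := by
    intro l i
    cases i
    · exact (hmle0 l).1
    · exact (hmle0 l).2
  have hflb : ∀ l, f (Sum.inl l) ≤ m l := fun l =>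
    hmmax l _ (hf₁ _ _ (btLE_bext l false) (by simp)).le (hf₁ _ _ (btLE_bext l true) (by simp)).le
  have hmlt : ∀ l i, m l < f (Sum.inr (bext l i)) := by
    intro l i
    refine lt_of_le_of_ne (hmle l i) fun h => ?_
    have hne : bext l i ≠ bext l (!i) := bext_ne l i
    have h1 : ¬ btLE (Sum.inr (bext l i)) (Sum.inr (bext l (!i))) := fun hb => hne hb
    have h2 : ¬ btLE (Sum.inr (bext l (!i))) (Sum.inr (bext l i)) := fun hb => hne hb.symm
    exact (hf₂ _ _ h1 h2).1 (h ▸ hmle l (!i))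
  have hstep : ∀ l i, m l ≤ f (Sum.inl (l ++ [i])) := by
    intro l i
    have h1 : f (Sum.inl (l ++ [i])) < f (Sum.inr (bext l i)) :=
      hf₁ _ _ (btLE_concat_bext l i) (by simp)
    rcases tri hwo (hmlt l i) h1 with h | h | h
    · exact h.le
    · exact h.le
    · exfalso
      have h2 : f (Sum.inl (l ++ [i])) ≤ f (Sum.inr (bext l (!i))) := h.le.trans (hmle l (!i))
      have hn1 : ¬ btLE (Sum.inl (l ++ [i])) (Sum.inr (bext l (!i))) :=
        not_btLE_of_bit l i _ (by rw [bext_at]; cases i <;> simp)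
      exact (hf₂ _ _ hn1 not_btLE_inr_inl).1 h2
  -- the key extension bit
  have hkey : ∀ (l : List Bool) (u : Bt), btLE (Sum.inl l) u → u ≠ Sum.inl l →
      ∃ i : Bool, btLE (Sum.inl (l ++ [i])) u := by
    intro l u hu hne
    match u with
    | Sum.inl l' =>
      have hp : l <+: l' := hu
      have hlen : l.length < l'.length :=
        lt_of_le_of_ne hp.length_le (fun h => hne (by rw [hp.eq_of_length h]))
      refine ⟨l'[l.length], ?_⟩
      show (l ++ [l'[l.length]]) <+: l'
      apply pfx_of (by simpa using hlen)
      intro k hk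
      rw [List.length_append, List.length_singleton] at hk
      rcases lt_or_eq_of_le (Nat.lt_succ_iff.1 hk) with h | h
      · rw [concat_lt l _ h]
        exact pfx_get hp h
      · subst h
        rw [concat_at]
    | Sum.inr x =>
      refine ⟨x l.length, ?_⟩
      rw [btLE_inl_inr]
      intro k hk
      rw [List.length_append, List.length_singleton] at hk
      rcases lt_or_eq_of_le (Nat.lt_succ_iff.1 hk) with h | h
      · rw [concat_lt l _ h]
        exact (btLE_inl_inr.1 hu) k h
      · subst h
        rw [concat_at]
  have hA : ∀ (l : List Bool) (u : Bt), btLE (Sum.inl l) u → u ≠ Sum.inl l → m l ≤ f u := by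
    intro l u hu hne
    obtain ⟨i, hi⟩ := hkey l u hu hne
    rcases eq_or_ne u (Sum.inl (l ++ [i])) with rfl | h
    · exact hstep l i
    · exact (hstep l i).trans (hf₁ _ _ hi (Ne.symm h)).le
  have hmono : ∀ l l', l <+: l' → l ≠ l' → m l < m l' := by
    intro l l' hp hne
    have hle : m l ≤ m l' :=
      (hA l (Sum.inl l') hp (fun h => hne (Sum.inl.inj h).symm)).trans (hflb l')
    refine lt_of_le_of_ne hle fun heq => ?_
    have hlen : l.length < l'.length :=
      lt_of_le_of_ne hp.length_le (fun h => hne (hp.eq_of_length h))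
    have h1 : m l ≤ f (Sum.inl (l ++ [!l'[l.length]])) :=
      hA l (Sum.inl (l ++ [!l'[l.length]]))
        (show (l : List Bool) <+: l ++ [!l'[l.length]] from List.prefix_append _ _)
        (inl_concat_ne l _)
    have h2 : f (Sum.inl l') ≤ f (Sum.inl (l ++ [!l'[l.length]])) := (hflb l').trans (heq ▸ h1)
    have hn1 : ¬ btLE (Sum.inl l') (Sum.inl (l ++ [!l'[l.length]])) := by
      intro hb
      have hb' : l' <+: l ++ [!l'[l.length]] := hb
      have hlen2 : l'.length = l.length + 1 := le_antisymm (by simpa using hb'.length_le) hlen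
      have heql : l' = l ++ [!l'[l.length]] := hb'.eq_of_length (by simp [hlen2])
      have hbit := (List.getElem_of_eq heql hlen).trans (concat_at l (!l'[l.length]))
      simp at hbit
    have hn2 : ¬ btLE (Sum.inl (l ++ [!l'[l.length]])) (Sum.inl l') := by
      intro hb
      have hb' : (l ++ [!l'[l.length]]) <+: l' := hb
      have hbit := pfx_get hb' (i := l.length) (by simp)
      have hbit2 := (concat_at l (!l'[l.length])).symm.trans hbit
      simp at hbit2
    exact (hf₂ _ _ hn1 hn2).1 h2
  -- chains and their sups
  have hchain : ∀ (x : ℕ → Bool) (n : ℕ), m (bres x n) < m (bres x (n + 1)) := by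
    intro x n
    apply hmono _ _ (bres_prefix x (Nat.le_succ n))
    intro h
    have := congrArg List.length h
    simp at this
  have hboundlt : ∀ (x : ℕ → Bool) (n : ℕ), m (bres x n) < f (Sum.inr x) := by
    intro x n
    have hle : m (bres x n) ≤ f (Sum.inr x) := hA _ _ (btLE_bres x n) (by simp)
    refine lt_of_le_of_ne hle fun heq => ?_
    have h1 : m (bres x n) ≤ f (Sum.inl (bres x n ++ [!(x n)])) :=
      hA _ (Sum.inl (bres x n ++ [!(x n)]))
        (show (bres x n : List Bool) <+: bres x n ++ [!(x n)] from List.prefix_append _ _)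
        (inl_concat_ne _ _)
    have h2 : f (Sum.inr x) ≤ f (Sum.inl (bres x n ++ [!(x n)])) := heq ▸ h1
    have hn1 : ¬ btLE (Sum.inl (bres x n ++ [!(x n)])) (Sum.inr x) := by
      apply not_btLE_of_bit
      rw [bres_length]
      cases x n <;> simp
    exact (hf₂ _ _ hn1 not_btLE_inr_inl).2 h2
  have hM : ∀ x : ℕ → Bool, ∃ Mx : T, Mx ≤ f (Sum.inr x) ∧ (∀ n, m (bres x n) < Mx) ∧
      ∀ u : T, (∀ n, m (bres x n) ≤ u) → Mx ≤ u :=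
    fun x => sup_exists hwo hlim _ (hchain x) (hboundlt x)
  choose M hMf hMlt hMmin using hM
  set g : Bt → T := Sum.elim m M with hgdef
  -- property 1 : strict monotonicity
  have P1 : ∀ s t : Bt, btLE s t → s ≠ t → g s < g t := by
    intro s t hst hne
    match s, t with
    | Sum.inl l, Sum.inl l' => exact hmono l l' hst (fun h => hne (by rw [h]))
    | Sum.inl l, Sum.inr x =>
      have hl : l = bres x l.length := eq_bres_of_btLE hst
      show m l < M x
      rw [hl]
      exact hMlt x l.length
    | Sum.inr x, Sum.inl l => exact absurd hst not_btLE_inr_inl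
    | Sum.inr x, Sum.inr y => exact absurd (congrArg Sum.inr (hst : x = y)) hne
  have gle : ∀ s t : Bt, btLE s t → g s ≤ g t := by
    intro s t h
    rcases eq_or_ne s t with rfl | hne
    · exact le_refl _
    · exact (P1 s t h hne).le
  -- property 2 : incomparability preservation
  have h_fin : ∀ l l' : List Bool, ¬ l <+: l' → ¬ l' <+: l → ¬ m l ≤ m l' := by
    intro l l' h1 h2 hle
    have h3 : f (Sum.inl l) ≤ f (Sum.inr (bext l' false)) :=
      (hflb l).trans (hle.trans (hmle l' false))
    exact (hf₂ _ _ (incomp_ext h1 h2 false) not_btLE_inr_inl).1 h3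
  have h_fm : ∀ (l : List Bool) (x : ℕ → Bool), ¬ btLE (Sum.inl l) (Sum.inr x) →
      ¬ m l ≤ M x ∧ ¬ M x ≤ m l := by
    intro l x hn
    constructor
    · intro hle
      have h3 : f (Sum.inl l) ≤ f (Sum.inr x) := (hflb l).trans (hle.trans (hMf x))
      exact (hf₂ _ _ hn not_btLE_inr_inl).1 h3
    · intro hle
      rw [btLE_inl_inr] at hn
      push_neg at hn
      obtain ⟨k, hk, hkne⟩ := hn
      have h5 : f (Sum.inl (bres x l.length)) ≤ f (Sum.inr (bext l false)) :=
        (hflb _).trans ((hMlt x l.length).le.trans (hle.trans (hmle l false)))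
      have hn2 : ¬ btLE (Sum.inl (bres x l.length)) (Sum.inr (bext l false)) := by
        rw [btLE_inl_inr]
        intro hb
        have := hb k (by simpa using hk)
        rw [bres_get, bext_lt l false hk] at this
        exact hkne this.symm
      exact (hf₂ _ _ hn2 not_btLE_inr_inl).1 h5
  have h_inf : ∀ x y : ℕ → Bool, x ≠ y → ¬ M x ≤ M y := by
    intro x y hxy hle
    obtain ⟨k, hk⟩ := Function.ne_iff.1 hxy
    have h3 : f (Sum.inl (bres x (k + 1))) ≤ f (Sum.inr y) :=
      (hflb _).trans ((hMlt x (k + 1)).le.trans (hle.trans (hMf y)))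
    have hn : ¬ btLE (Sum.inl (bres x (k + 1))) (Sum.inr y) := by
      rw [btLE_inl_inr]
      intro hb
      have := hb k (by simp)
      rw [bres_get] at this
      exact hk this
    exact (hf₂ _ _ hn not_btLE_inr_inl).1 h3
  have P2 : ∀ s t : Bt, ¬ btLE s t → ¬ btLE t s → ¬ (g s ≤ g t) ∧ ¬ (g t ≤ g s) := by
    intro s t h1 h2
    match s, t with
    | Sum.inl l, Sum.inl l' => exact ⟨h_fin l l' h1 h2, h_fin l' l h2 h1⟩
    | Sum.inl l, Sum.inr x => exact h_fm l x h1
    | Sum.inr x, Sum.inl l => exact ⟨(h_fm l x h2).2, (h_fm l x h2).1⟩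
    | Sum.inr x, Sum.inr y =>
      exact ⟨h_inf x y (fun h => h1 h), h_inf y x (fun h => h1 h.symm)⟩
  -- property 3 : meet preservation
  have P3 : ∀ a b c : Bt,
      (btLE c a ∧ btLE c b ∧ ∀ r : Bt, btLE r a → btLE r b → btLE r c) →
      (g c ≤ g a ∧ g c ≤ g b ∧ ∀ r : T, r ≤ g a → r ≤ g b → r ≤ g c) := by
    rintro a b c ⟨hca, hcb, hcmax⟩
    by_cases hab : btLE a b
    · have hceq : c = a := btLE_antisymm c a hca (hcmax a (btLE_refl a) hab)
      subst hceq
      exact ⟨le_refl _, gle _ _ hcb, fun r h1 _ => h1⟩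
    · by_cases hba : btLE b a
      · have hceq : c = b := btLE_antisymm c b hcb (hcmax b hba (btLE_refl b))
        subst hceq
        exact ⟨gle _ _ hca, le_refl _, fun r _ h2 => h2⟩
      · -- a and b incomparable; c is a finite common lower bound
        obtain ⟨l, rfl⟩ : ∃ l, c = Sum.inl l := by
          match c with
          | Sum.inl l => exact ⟨l, rfl⟩
          | Sum.inr z =>
            exfalso
            match a with
            | Sum.inl l' => exact not_btLE_inr_inl hca
            | Sum.inr w =>
              have hzw : z = w := hca
              subst hzw
              exact hab hcb
        have hnea : a ≠ Sum.inl l := by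
          rintro rfl
          exact hab hcb
        have hneb : b ≠ Sum.inl l := by
          rintro rfl
          exact hba hca
        -- build the infinite branches
        have hub : ∀ u : Bt, btLE (Sum.inl l) u → u ≠ Sum.inl l →
            ∃ (i : Bool) (α : ℕ → Bool), btLE (Sum.inl (l ++ [i])) u ∧
              g u ≤ f (Sum.inr α) ∧ btLE (Sum.inl (l ++ [i])) (Sum.inr α) ∧ α l.length = i := by
          intro u hu hne
          obtain ⟨i, hi⟩ := hkey l u hu hne
          match u with
          | Sum.inl l' =>
            have hp : (l ++ [i]) <+: l' := hi
            have hlen : l.length < l'.length := by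
              have := hp.length_le
              simp at this
              omega
            refine ⟨i, bext l' false, hi, hmle l' false,
              btLE_trans _ (Sum.inl l') _ hi (btLE_bext l' false), ?_⟩
            have h1 := pfx_get hp (i := l.length) (by simp)
            rw [concat_at] at h1
            rw [bext_lt l' false hlen, ← h1]
          | Sum.inr x =>
            refine ⟨i, x, hi, hMf x, hi, ?_⟩
            have := (btLE_inl_inr.1 hi) l.length (by simp)
            rw [concat_at] at this
            exact this.symm
        obtain ⟨ia, α, hia, hga, hiaα, hαv⟩ := hub a hca hnea
        obtain ⟨ib, β, hib, hgb, hibβ, hβv⟩ := hub b hcb hneb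
        have hiab : ia ≠ ib := by
          intro h
          have hc := hcmax (Sum.inl (l ++ [ia])) hia (h ▸ hib)
          have : (l ++ [ia]) <+: l := hc
          have := this.length_le
          simp at this
        have hαβ : α ≠ β := by
          intro h
          apply hiab
          rw [← hαv, ← hβv, h]
        have hfαβ := hf₂ (Sum.inr α) (Sum.inr β) (fun h => hαβ h) (fun h => hαβ h.symm)
        refine ⟨(P1 _ _ hca (Ne.symm hnea)).le, (P1 _ _ hcb (Ne.symm hneb)).le, ?_⟩
        intro r hra hrb
        have hr1 : r ≤ f (Sum.inr α) := hra.trans hga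
        have hr2 : r ≤ f (Sum.inr β) := hrb.trans hgb
        have hstepA : r ≤ f (Sum.inl (l ++ [ia])) := by
          have h1 : f (Sum.inl (l ++ [ia])) < f (Sum.inr α) := hf₁ _ _ hiaα (by simp)
          have h2 : r < f (Sum.inr α) := lt_of_le_of_ne hr1 (fun h => hfαβ.1 (h ▸ hr2))
          rcases tri hwo h2 h1 with h | h | h
          · exact h.le
          · exact h.le
          · exfalso
            have h3 : f (Sum.inl (l ++ [ia])) ≤ f (Sum.inr β) := h.le.trans hr2
            have hn : ¬ btLE (Sum.inl (l ++ [ia])) (Sum.inr β) :=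
              not_btLE_of_bit l ia β (by rw [hβv]; exact Ne.symm hiab)
            exact (hf₂ _ _ hn not_btLE_inr_inl).1 h3
        have hstepB : r ≤ f (Sum.inl (l ++ [ib])) := by
          have h1 : f (Sum.inl (l ++ [ib])) < f (Sum.inr β) := hf₁ _ _ hibβ (by simp)
          have h2 : r < f (Sum.inr β) := lt_of_le_of_ne hr2 (fun h => hfαβ.2 (h ▸ hr1))
          rcases tri hwo h2 h1 with h | h | h
          · exact h.le
          · exact h.le
          · exfalso
            have h3 : f (Sum.inl (l ++ [ib])) ≤ f (Sum.inr α) := h.le.trans hr1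
            have hn : ¬ btLE (Sum.inl (l ++ [ib])) (Sum.inr α) :=
              not_btLE_of_bit l ib α (by rw [hαv]; exact hiab)
            exact (hf₂ _ _ hn not_btLE_inr_inl).1 h3
        have hfa : r ≤ f (Sum.inr (bext l ia)) :=
          hstepA.trans (hf₁ _ _ (btLE_concat_bext l ia) (by simp)).le
        have hfb : r ≤ f (Sum.inr (bext l ib)) :=
          hstepB.trans (hf₁ _ _ (btLE_concat_bext l ib) (by simp)).le
        have hall : ∀ j : Bool, r ≤ f (Sum.inr (bext l j)) := by
          intro j
          rcases eq_or_ne j ia with rfl | h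
          · exact hfa
          · rw [bool_resolve h hiab]
            exact hfb
        exact hmmax l r (hall false) (hall true)
  -- property 4 : continuity at limits
  have P4 : ∀ x : ℕ → Bool,
      IsLUB {t : T | ∃ n : ℕ, t = g (Sum.inl (List.ofFn fun i : Fin n => x i.1))}
        (g (Sum.inr x)) := by
    intro x
    constructor
    · rintro t ⟨n, rfl⟩
      exact (hMlt x n).le
    · intro u hu
      exact hMmin x u (fun n => hu ⟨n, rfl⟩)
  exact ⟨g, P1, P2, P3, P4⟩
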